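/- For every integer n ≥ 3, csc(π(2n-3)/(2n)) + csc(π(2n-1)/(2n)) < 3·csc(π(n-1)/n). -/

import Mathlib

open Real

theorem last_two_terms (n : ℕ) (hn : 3 ≤ n) :
    1 / Real.sin (π * (2 * n - 3) / (2 * n)) + 1 / Real.sin (π * (2 * n - 1) / (2 * n)) <
      3 * (1 / Real.sin (π * (n - 1) / n)) := by
  have hn3 : (3:ℝ) ≤ n := by exact_mod_cast hn
  have hnpos : (0:ℝ) < n := by linarith
  have hne : (n:ℝ) ≠ 0 := ne_of_gt hnpos
  set x := π / (2 * n) with hx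
  have hπ := Real.pi_pos
  have hxpos : 0 < x := by positivity
  have hx6 : x ≤ π / 6 := by
    rw [hx, div_le_div_iff₀ (by positivity) (by norm_num)]
    nlinarith
  have e1 : π * (2 * n - 3) / (2 * n) = π - 3 * x := by
    rw [hx]; field_simp
  have e2 : π * (2 * n - 1) / (2 * n) = π - x := by
    rw [hx]; field_simp
  have e3 : π * (n - 1) / n = π - 2 * x := by
    rw [hx]; field_simp
  rw [e1, e2, e3, Real.sin_pi_sub, Real.sin_pi_sub, Real.sin_pi_sub]
  have hs1 : 0 < Real.sin x := Real.sin_pos_of_pos_of_lt_pi hxpos (by linarith)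
  have hs2 : 0 < Real.sin (2 * x) := Real.sin_pos_of_pos_of_lt_pi (by linarith) (by linarith)
  have hs3 : 0 < Real.sin (3 * x) := Real.sin_pos_of_pos_of_lt_pi (by linarith) (by linarith)
  have hmono : Real.sin (2 * x) < Real.sin (3 * x) := by
    apply Real.strictMonoOn_sin ⟨by linarith, by linarith⟩ ⟨by linarith, by linarith⟩
    linarith
  have hcos : Real.cos x < 1 := by
    have h := Real.cos_lt_cos_of_nonneg_of_le_pi le_rfl (by linarith) hxpos
    simpa using h
  have hcospos : 0 < Real.cos x := Real.cos_pos_of_mem_Ioo ⟨by linarith, by linarith⟩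
  have hsin2 : Real.sin (2 * x) = 2 * Real.sin x * Real.cos x := Real.sin_two_mul x
  have h1 : 1 / Real.sin (3 * x) < 1 / Real.sin (2 * x) :=
    one_div_lt_one_div_of_lt hs2 hmono
  have h2 : 1 / Real.sin x < 2 / Real.sin (2 * x) := by
    rw [hsin2, div_lt_div_iff₀ hs1 (by positivity)]
    nlinarith
  have h3 : (1:ℝ)/Real.sin (2*x) + 2/Real.sin (2*x) = 3 * (1 / Real.sin (2*x)) := by ring
  linarith
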